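/- In a planar graph G, if v has degree 3 with neighborhood {x₁,x₂,x₃} inducing a triangle and some vertex u ≠ v is adjacent to all of x₁, x₂, x₃, then each of the three regions determined by u and the triangle contains at most one vertex y adjacent to u and to both endpoints of the corresponding triangle edge; i.e., there are at most 3 star edges with respect to v. -/

import Mathlib

open SimpleGraph Finset

variable {V W : Type*}

/-- A path on 4 distinct vertices `a b c d` in `G`. -/
def IsPath4 (G : SimpleGraph V) (a b c d : V) : Prop :=
  G.Adj a b ∧ G.Adj b c ∧ G.Adj c d ∧
    a ≠ b ∧ a ≠ c ∧ a ≠ d ∧ b ≠ c ∧ b ≠ d ∧ c ≠ d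

/-- The number of paths on 4 vertices (3-paths) of `G`, counted as subgraphs,
i.e. ordered labelled paths identified with their reversals. -/
noncomputable def pathCount4 (G : SimpleGraph V) : ℕ :=
  {p : V × V × V × V | IsPath4 G p.1 p.2.1 p.2.2.1 p.2.2.2}.ncard / 2

/-- An embedding of a subdivision of `H` into `G`: branch vertices joined by
internally disjoint paths. -/
structure SubdivEmb (H : SimpleGraph W) (G : SimpleGraph V) where
  branch : W ↪ V
  walk : ∀ a b, H.Adj a b → G.Walk (branch a) (branch b)
  walk_isPath : ∀ a b (h : H.Adj a b), (walk a b h).IsPath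
  branch_mem : ∀ a b (h : H.Adj a b) (w : W),
    branch w ∈ (walk a b h).support → w = a ∨ w = b
  disjoint : ∀ a b c d (h₁ : H.Adj a b) (h₂ : H.Adj c d), s(a, b) ≠ s(c, d) →
    ∀ v, v ∈ (walk a b h₁).support → v ∈ (walk c d h₂).support →
      ∃ w, (w = a ∨ w = b) ∧ (w = c ∨ w = d) ∧ v = branch w

/-- A graph is planar iff it contains no subdivision of `K₅` nor of `K₃,₃`
(Kuratowski's theorem). -/
def IsPlanar (G : SimpleGraph V) : Prop :=
  IsEmpty (SubdivEmb (⊤ : SimpleGraph (Fin 5)) G) ∧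
  IsEmpty (SubdivEmb (completeBipartiteGraph (Fin 3) (Fin 3)) G)

/-- The graph `Fₙ`: a path on `n - 2` vertices (`0, …, n-3`) plus two adjacent
vertices (`n-2` and `n-1`), each joined to every vertex of the path. -/
def Fgraph (n : ℕ) : SimpleGraph (Fin n) :=
  SimpleGraph.fromRel (fun a b =>
    (b.val = a.val + 1 ∧ b.val < n - 2) ∨
    (a.val < n - 2 ∧ n - 2 ≤ b.val) ∨
    (n - 2 ≤ a.val ∧ n - 2 ≤ b.val))

/-- The number of triangles of `G`. -/
noncomputable def triangleCount (G : SimpleGraph V) : ℕ :=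
  {s : Finset V | G.IsNClique 3 s}.ncard


namespace StarAux

variable {V : Type*}

/-- Hypothesis pack for the K₃,₃ construction. -/
structure Hyp (G : SimpleGraph V) (a b c u v y y' : V) : Prop where
  hab : a ≠ b
  hau : a ≠ u
  hbu : b ≠ u
  huv : u ≠ v
  hyy : y ≠ y'
  hyv : y ≠ v
  hy'v : y' ≠ v
  hca : c ≠ a
  hcb : c ≠ b
  hcy : c ≠ y
  hcy' : c ≠ y'
  hay : G.Adj a y
  hby : G.Adj b y
  huy : G.Adj u y
  hay' : G.Adj a y'
  hby' : G.Adj b y'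
  huy' : G.Adj u y'
  hav : G.Adj a v
  hbv : G.Adj b v
  huc : G.Adj u c
  hcv : G.Adj c v

variable {G : SimpleGraph V} {a b c u v y y' : V}

def Bm (a b u y y' v : V) : Fin 3 ⊕ Fin 3 → V := Sum.elim ![a, b, u] ![y, y', v]

def Fw (h : Hyp G a b c u v y y') : ∀ i j : Fin 3, G.Walk (![a, b, u] i) (![y, y', v] j)
  | 0, 0 => .cons h.hay .nil
  | 0, 1 => .cons h.hay' .nil
  | 0, 2 => .cons h.hav .nil
  | 1, 0 => .cons h.hby .nil
  | 1, 1 => .cons h.hby' .nil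
  | 1, 2 => .cons h.hbv .nil
  | 2, 0 => .cons h.huy .nil
  | 2, 1 => .cons h.huy' .nil
  | 2, 2 => .cons h.huc (.cons h.hcv .nil)

lemma Fw_support (h : Hyp G a b c u v y y') (i j : Fin 3) :
    (Fw h i j).support =
      if i = 2 ∧ j = 2 then [u, c, v] else [![a, b, u] i, ![y, y', v] j] := by
  fin_cases i <;> fin_cases j <;> rfl

def Ww (h : Hyp G a b c u v y y') :
    ∀ p q, (completeBipartiteGraph (Fin 3) (Fin 3)).Adj p q →
      G.Walk (Bm a b u y y' v p) (Bm a b u y y' v q)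
  | .inl i, .inr j, _ => Fw h i j
  | .inr j, .inl i, _ => (Fw h i j).reverse
  | .inl _, .inl _, hadj => absurd hadj (by simp)
  | .inr _, .inr _, hadj => absurd hadj (by simp)

lemma Ww_mem_support (h : Hyp G a b c u v y y') :
    ∀ p q (hpq : (completeBipartiteGraph (Fin 3) (Fin 3)).Adj p q) (x : V),
      x ∈ (Ww h p q hpq).support →
        (x = Bm a b u y y' v p ∨ x = Bm a b u y y' v q) ∨
          (x = c ∧ s(p, q) = s(Sum.inl 2, Sum.inr 2)) := by
  rintro (i | i) (j | j) hpq x hx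
  · simp at hpq
  · change x ∈ (Fw h i j).support at hx
    rw [Fw_support] at hx
    split_ifs at hx with hij
    · obtain ⟨rfl, rfl⟩ := hij
      simp only [List.mem_cons, List.not_mem_nil, or_false] at hx
      rcases hx with rfl | rfl | rfl
      · exact Or.inl (Or.inl rfl)
      · exact Or.inr ⟨rfl, rfl⟩
      · exact Or.inl (Or.inr rfl)
    · simp only [List.mem_cons, List.not_mem_nil, or_false] at hx
      exact Or.inl hx
  · change x ∈ (Fw h j i).reverse.support at hx
    rw [Walk.support_reverse, List.mem_reverse, Fw_support] at hx
    split_ifs at hx with hij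
    · obtain ⟨rfl, rfl⟩ := hij
      simp only [List.mem_cons, List.not_mem_nil, or_false] at hx
      rcases hx with rfl | rfl | rfl
      · exact Or.inl (Or.inr rfl)
      · exact Or.inr ⟨rfl, by rw [Sym2.eq_swap]⟩
      · exact Or.inl (Or.inl rfl)
    · simp only [List.mem_cons, List.not_mem_nil, or_false] at hx
      exact Or.inl hx.symm
  · simp at hpq

lemma Bm_inj (h : Hyp G a b c u v y y') : Function.Injective (Bm a b u y y' v) := by
  have h1 := h.hab; have h2 := h.hau; have h3 := h.hbu; have h4 := h.huv
  have h5 := h.hyy; have h6 := h.hyv; have h7 := h.hy'v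
  have n1 := h.hay.ne; have n2 := h.hay'.ne; have n3 := h.hav.ne
  have n4 := h.hby.ne; have n5 := h.hby'.ne; have n6 := h.hbv.ne
  have n7 := h.huy.ne; have n8 := h.huy'.ne
  rintro (i | i) (j | j) hij <;> fin_cases i <;> fin_cases j <;> simp_all [Bm]

lemma Bm_ne_c (h : Hyp G a b c u v y y') : ∀ w, Bm a b u y y' v w ≠ c := by
  have h1 := h.hca; have h2 := h.hcb; have h3 := h.hcy; have h4 := h.hcy'
  have n1 := h.huc.ne'; have n2 := h.hcv.ne
  rintro (i | i) <;> fin_cases i <;> simp_all [Bm, eq_comm]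

lemma k33 (hG : IsEmpty (SubdivEmb (completeBipartiteGraph (Fin 3) (Fin 3)) G))
    (h : Hyp G a b c u v y y') : False := by
  apply hG.false
  refine ⟨⟨Bm a b u y y' v, Bm_inj h⟩, Ww h, ?_, ?_, ?_⟩
  · rintro (i | i) (j | j) hpq
    · simp at hpq
    · change (Fw h i j).IsPath
      have n1 := h.huv; have n2 := h.huc.ne; have n3 := h.hcv.ne
      have n4 := h.hay.ne; have n5 := h.hay'.ne; have n6 := h.hav.ne
      have n7 := h.hby.ne; have n8 := h.hby'.ne; have n9 := h.hbv.ne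
      have n10 := h.huy.ne; have n11 := h.huy'.ne
      fin_cases i <;> fin_cases j <;>
        simp_all [Fw, Bm, Walk.isPath_def, Walk.support]
    · change (Fw h j i).reverse.IsPath
      rw [Walk.isPath_reverse_iff]
      have n1 := h.huv; have n2 := h.huc.ne; have n3 := h.hcv.ne
      have n4 := h.hay.ne; have n5 := h.hay'.ne; have n6 := h.hav.ne
      have n7 := h.hby.ne; have n8 := h.hby'.ne; have n9 := h.hbv.ne
      have n10 := h.huy.ne; have n11 := h.huy'.ne
      fin_cases i <;> fin_cases j <;>
        simp_all [Fw, Bm, Walk.isPath_def, Walk.support]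
    · simp at hpq
  · intro p q hpq w hw
    rcases Ww_mem_support h p q hpq _ hw with (hh | hh) | ⟨hh, _⟩
    · exact Or.inl (Bm_inj h hh)
    · exact Or.inr (Bm_inj h hh)
    · exact absurd hh (Bm_ne_c h w)
  · intro p q r s h₁ h₂ hne x hx₁ hx₂
    rcases Ww_mem_support h p q h₁ x hx₁ with hh₁ | ⟨rfl, he₁⟩
    · rcases Ww_mem_support h r s h₂ x hx₂ with hh₂ | ⟨hc, _⟩
      · rcases hh₁ with rfl | rfl <;> rcases hh₂ with hh₂ | hh₂
        · exact ⟨p, Or.inl rfl, Or.inl (Bm_inj h hh₂), rfl⟩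
        · exact ⟨p, Or.inl rfl, Or.inr (Bm_inj h hh₂), rfl⟩
        · exact ⟨q, Or.inr rfl, Or.inl (Bm_inj h hh₂), rfl⟩
        · exact ⟨q, Or.inr rfl, Or.inr (Bm_inj h hh₂), rfl⟩
      · rcases hh₁ with rfl | rfl
        · exact absurd hc (Bm_ne_c h p)
        · exact absurd hc (Bm_ne_c h q)
    · rcases Ww_mem_support h r s h₂ _ hx₂ with hh₂ | ⟨_, he₂⟩
      · rcases hh₂ with hh₂ | hh₂
        · exact absurd hh₂.symm (Bm_ne_c h r)
        · exact absurd hh₂.symm (Bm_ne_c h s)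
      · exact absurd (he₁.trans he₂.symm) hne

end StarAux
/-- In a planar graph, if `v` has degree 3 with neighborhood
`{x₁,x₂,x₃}` inducing a triangle and `u ≠ v` is adjacent to all of `x₁,x₂,x₃`,
then there are at most 3 star edges with respect to `v`: at most 3 vertices
`y ∉ {v,x₁,x₂,x₃}` adjacent to `u` and to at least two of `x₁,x₂,x₃`. -/
theorem star_edges_le_three {V : Type*} [Fintype V]
    (G : SimpleGraph V) (hG : IsPlanar G) (v x₁ x₂ x₃ u : V)
    (h12 : x₁ ≠ x₂) (h13 : x₁ ≠ x₃) (h23 : x₂ ≠ x₃)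
    (hN : G.neighborSet v = {x₁, x₂, x₃})
    (ha12 : G.Adj x₁ x₂) (ha13 : G.Adj x₁ x₃) (ha23 : G.Adj x₂ x₃)
    (huv : u ≠ v) (hu1 : G.Adj u x₁) (hu2 : G.Adj u x₂) (hu3 : G.Adj u x₃) :
    {y : V | y ∉ ({v, x₁, x₂, x₃} : Set V) ∧ G.Adj u y ∧
        ((G.Adj y x₁ ∧ G.Adj y x₂) ∨ (G.Adj y x₁ ∧ G.Adj y x₃) ∨
          (G.Adj y x₂ ∧ G.Adj y x₃))}.ncard ≤ 3 := by
  classical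
  obtain ⟨-, hK33⟩ := hG
  have hv1 : G.Adj v x₁ := by rw [← SimpleGraph.mem_neighborSet, hN]; simp
  have hv2 : G.Adj v x₂ := by rw [← SimpleGraph.mem_neighborSet, hN]; simp
  have hv3 : G.Adj v x₃ := by rw [← SimpleGraph.mem_neighborSet, hN]; simp
  refine le_trans (Set.ncard_le_ncard_of_injOn
    (fun y => if G.Adj y x₁ ∧ G.Adj y x₂ then (0 : Fin 3)
      else if G.Adj y x₁ ∧ G.Adj y x₃ then 1 else 2)
    (fun a _ => Set.mem_univ a) ?_ Set.finite_univ) (by simp [Set.ncard_univ])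
  intro y hy y' hy' hf
  by_contra hne
  simp only [Set.mem_setOf_eq, Set.mem_insert_iff, Set.mem_singleton_iff,
    not_or] at hy hy'
  obtain ⟨⟨hyv, hy1, hy2, hy3⟩, huy, hyp⟩ := hy
  obtain ⟨⟨hy'v, hy'1, hy'2, hy'3⟩, huy', hyp'⟩ := hy'
  simp only at hf
  by_cases c1 : G.Adj y x₁ ∧ G.Adj y x₂
  · rw [if_pos c1] at hf
    by_cases c1' : G.Adj y' x₁ ∧ G.Adj y' x₂
    · exact StarAux.k33 hK33
        ⟨h12, hu1.ne', hu2.ne', huv, hne, hyv, hy'v, h13.symm, h23.symm,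
          Ne.symm hy3, Ne.symm hy'3,
          c1.1.symm, c1.2.symm, huy, c1'.1.symm, c1'.2.symm, huy',
          hv1.symm, hv2.symm, hu3, hv3.symm⟩
    · rw [if_neg c1'] at hf
      split_ifs at hf <;> exact absurd hf (by decide)
  · rw [if_neg c1] at hf
    by_cases c2 : G.Adj y x₁ ∧ G.Adj y x₃
    · rw [if_pos c2] at hf
      by_cases c2' : G.Adj y' x₁ ∧ G.Adj y' x₃
      · exact StarAux.k33 hK33
          ⟨h13, hu1.ne', hu3.ne', huv, hne, hyv, hy'v, h12.symm, h23,
            Ne.symm hy2, Ne.symm hy'2,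
            c2.1.symm, c2.2.symm, huy, c2'.1.symm, c2'.2.symm, huy',
            hv1.symm, hv3.symm, hu2, hv2.symm⟩
      · rw [if_neg c2'] at hf
        split_ifs at hf <;> exact absurd hf (by decide)
    · rw [if_neg c2] at hf
      have c3 : G.Adj y x₂ ∧ G.Adj y x₃ := by
        rcases hyp with h | h | h
        · exact absurd h c1
        · exact absurd h c2
        · exact h
      by_cases c1' : G.Adj y' x₁ ∧ G.Adj y' x₂
      · rw [if_pos c1'] at hf; exact absurd hf (by decide)
      · rw [if_neg c1'] at hf
        by_cases c2' : G.Adj y' x₁ ∧ G.Adj y' x₃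
        · rw [if_pos c2'] at hf; exact absurd hf (by decide)
        · have c3' : G.Adj y' x₂ ∧ G.Adj y' x₃ := by
            rcases hyp' with h | h | h
            · exact absurd h c1'
            · exact absurd h c2'
            · exact h
          exact StarAux.k33 hK33
            ⟨h23, hu2.ne', hu3.ne', huv, hne, hyv, hy'v, h12, h13,
              Ne.symm hy1, Ne.symm hy'1,
              c3.1.symm, c3.2.symm, huy, c3'.1.symm, c3'.2.symm, huy',
              hv2.symm, hv3.symm, hu1, hv1.symm⟩
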